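/- For m ≥ 1, 0 ≤ k ≤ m, and τ ∈ ℤ^m, the symmetric Laurent polynomials R_τ satisfy the splitting identity R_τ(y_1,...,y_m) = Σ_{B ⊆ {1,...,m}, |B|=k} R_{(τ_1,...,τ_k)}(y_B) · R_{(τ_{k+1},...,τ_m)}(y_{B̄}) · ∏_{i∈B, j∈B̄} (q y_j − q^{−1} y_i)/(y_j − y_i). -/

import Mathlib

open Finset

noncomputable def Rpol {F : Type*} [Field F] (q : F) {m : ℕ}
    (τ : Fin m → ℤ) (y : Fin m → F) : F :=
  ∑ σ : Equiv.Perm (Fin m),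
    (∏ i : Fin m, y (σ i) ^ (τ i)) *
      ∏ i : Fin m, ∏ j ∈ Finset.univ.filter (fun j => i < j),
        ((q * y (σ j) - q⁻¹ * y (σ i)) / (y (σ j) - y (σ i)))

section RSaux

lemma RS_prodOrderEmb {α : Type*} [LinearOrder α] {M : Type*} [CommMonoid M]
    (s : Finset α) {k : ℕ} (h : s.card = k) (f : α → M) :
    ∏ i : Fin k, f (s.orderEmbOfFin h i) = ∏ x ∈ s, f x := by
  rw [← Finset.prod_coe_sort s f,
    ← Equiv.prod_comp (s.orderIsoOfFin h).toEquiv (fun x : s => f x)]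
  rfl

variable {m k n : ℕ}

def RSe (hmn : k + n = m) : Fin k ⊕ Fin n ≃ Fin m := finSumFinEquiv.trans (finCongr hmn)

@[simp] lemma RSe_inl_val (hmn : k + n = m) (i : Fin k) :
    ((RSe hmn (Sum.inl i)) : ℕ) = (i : ℕ) := rfl

@[simp] lemma RSe_inr_val (hmn : k + n = m) (j : Fin n) :
    ((RSe hmn (Sum.inr j)) : ℕ) = k + (j : ℕ) := rfl

def RSf (B : Finset (Fin m)) (hB : B.card = k) (hC : Bᶜ.card = n)
    (π₁ : Equiv.Perm (Fin k)) (π₂ : Equiv.Perm (Fin n)) : Fin k ⊕ Fin n → Fin m :=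
  Sum.elim (fun i => B.orderEmbOfFin hB (π₁ i)) (fun j => Bᶜ.orderEmbOfFin hC (π₂ j))

lemma RSf_bij (hmn : k + n = m) (B : Finset (Fin m)) (hB : B.card = k) (hC : Bᶜ.card = n)
    (π₁ : Equiv.Perm (Fin k)) (π₂ : Equiv.Perm (Fin n)) :
    Function.Bijective (RSf B hB hC π₁ π₂) := by
  rw [Fintype.bijective_iff_injective_and_card]
  refine ⟨?_, by simp [hmn]⟩
  rintro (i | i) (j | j) h <;> simp only [RSf, Sum.elim_inl, Sum.elim_inr] at h
  · exact congrArg Sum.inl (π₁.injective ((B.orderEmbOfFin hB).injective h))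
  · have h1 := B.orderEmbOfFin_mem hB (π₁ i)
    have h2 := Bᶜ.orderEmbOfFin_mem hC (π₂ j)
    rw [h] at h1
    exact absurd h1 (Finset.mem_compl.mp h2)
  · have h1 := B.orderEmbOfFin_mem hB (π₁ j)
    have h2 := Bᶜ.orderEmbOfFin_mem hC (π₂ i)
    rw [← h] at h1
    exact absurd h1 (Finset.mem_compl.mp h2)
  · exact congrArg Sum.inr (π₂.injective ((Bᶜ.orderEmbOfFin hC).injective h))

noncomputable def RSΦ (hmn : k + n = m) (B : Finset (Fin m)) (hB : B.card = k) (hC : Bᶜ.card = n)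
    (π₁ : Equiv.Perm (Fin k)) (π₂ : Equiv.Perm (Fin n)) : Equiv.Perm (Fin m) :=
  (RSe hmn).symm.trans (Equiv.ofBijective _ (RSf_bij hmn B hB hC π₁ π₂))

lemma RSΦ_apply (hmn : k + n = m) (B : Finset (Fin m)) (hB : B.card = k) (hC : Bᶜ.card = n)
    (π₁ : Equiv.Perm (Fin k)) (π₂ : Equiv.Perm (Fin n)) (x : Fin k ⊕ Fin n) :
    RSΦ hmn B hB hC π₁ π₂ (RSe hmn x) = RSf B hB hC π₁ π₂ x := by
  simp [RSΦ, Equiv.ofBijective]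

lemma RScardC (hmn : k + n = m) {B : Finset (Fin m)} (hB : B.card = k) : Bᶜ.card = n := by
  rw [Finset.card_compl, hB, Fintype.card_fin]; omega

lemma RSΦ_image (hmn : k + n = m) (B : Finset (Fin m)) (hB : B.card = k) (hC : Bᶜ.card = n)
    (π₁ : Equiv.Perm (Fin k)) (π₂ : Equiv.Perm (Fin n)) :
    Finset.image (fun i : Fin k => RSΦ hmn B hB hC π₁ π₂ (RSe hmn (Sum.inl i))) univ = B := by
  apply Finset.eq_of_subset_of_card_le
  · intro a ha
    rw [Finset.mem_image] at ha
    obtain ⟨i, _, rfl⟩ := ha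
    rw [RSΦ_apply]
    exact B.orderEmbOfFin_mem hB (π₁ i)
  · rw [hB, Finset.card_image_of_injective _ (fun i j h => by
      simp only [RSΦ_apply, RSf, Sum.elim_inl] at h
      exact π₁.injective ((B.orderEmbOfFin hB).injective h))]
    simp

lemma RS_sum {F : Type*} [AddCommMonoid F] (hmn : k + n = m) (g : Equiv.Perm (Fin m) → F) :
    ∑ σ : Equiv.Perm (Fin m), g σ
      = ∑ B ∈ Finset.powersetCard k (Finset.univ : Finset (Fin m)),
          if hB : B.card = k then
            ∑ π₁ : Equiv.Perm (Fin k), ∑ π₂ : Equiv.Perm (Fin n),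
              g (RSΦ hmn B hB (RScardC hmn hB) π₁ π₂)
          else 0 := by
  classical
  set P := {B : Finset (Fin m) // B ∈ Finset.powersetCard k (Finset.univ : Finset (Fin m))}
    × Equiv.Perm (Fin k) × Equiv.Perm (Fin n) with hP
  have cardP : ∀ p : P, (p.1.1 : Finset (Fin m)).card = k :=
    fun p => (Finset.mem_powersetCard.mp p.1.2).2
  set Ψ : P → Equiv.Perm (Fin m) :=
    fun p => RSΦ hmn p.1.1 (cardP p) (RScardC hmn (cardP p)) p.2.1 p.2.2 with hΨ
  have hbij : Function.Bijective Ψ := by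
    rw [Fintype.bijective_iff_injective_and_card]
    constructor
    · rintro ⟨⟨B, hBm⟩, π₁, π₂⟩ ⟨⟨B', hBm'⟩, π₁', π₂'⟩ h
      simp only [hΨ] at h
      have hBB : B = B' := by
        rw [← RSΦ_image hmn B _ _ π₁ π₂, ← RSΦ_image hmn B' _ _ π₁' π₂']
        · exact Finset.image_congr (fun i _ => by rw [h])
        · exact (Finset.mem_powersetCard.mp hBm).2
        · exact RScardC hmn (Finset.mem_powersetCard.mp hBm).2
      subst hBB
      have h1 : π₁ = π₁' := by
        ext i
        have := DFunLike.congr_fun h (RSe hmn (Sum.inl i))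
        simp only [RSΦ_apply, RSf, Sum.elim_inl] at this
        exact congrArg Fin.val ((B.orderEmbOfFin (cardP ⟨⟨B, hBm⟩, π₁, π₂⟩)).injective this)
      have h2 : π₂ = π₂' := by
        ext i
        have := DFunLike.congr_fun h (RSe hmn (Sum.inr i))
        simp only [RSΦ_apply, RSf, Sum.elim_inr] at this
        exact congrArg Fin.val
          ((Bᶜ.orderEmbOfFin (RScardC hmn (cardP ⟨⟨B, hBm⟩, π₁, π₂⟩))).injective this)
      subst h1; subst h2; rfl
    · simp only [hP, Fintype.card_prod, Fintype.card_coe, Fintype.card_perm,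
        Finset.card_powersetCard, Finset.card_univ, Fintype.card_fin, Fintype.card_fin]
      have hk : k ≤ m := by omega
      have := Nat.choose_mul_factorial_mul_factorial hk
      have hn : n = m - k := by omega
      subst hn
      rw [← this]; ring
  rw [← Fintype.sum_bijective Ψ hbij _ g (fun p => rfl)]
  rw [Fintype.sum_prod_type]
  rw [Finset.univ_eq_attach]
  rw [← Finset.sum_attach (Finset.powersetCard k (Finset.univ : Finset (Fin m)))
    (fun B => if hB : B.card = k then
      ∑ π₁ : Equiv.Perm (Fin k), ∑ π₂ : Equiv.Perm (Fin n),
        g (RSΦ hmn B hB (RScardC hmn hB) π₁ π₂) else 0)]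
  refine Finset.sum_congr rfl fun B _ => ?_
  rw [Fintype.sum_prod_type, dif_pos ((Finset.mem_powersetCard.mp B.2).2)]

variable {F : Type*} [Field F]

lemma RS_term (hmn : k + n = m) (q : F) (τ : Fin m → ℤ) (y : Fin m → F)
    (B : Finset (Fin m)) (hB : B.card = k) (hC : Bᶜ.card = n) :
    (∑ π₁ : Equiv.Perm (Fin k), ∑ π₂ : Equiv.Perm (Fin n),
      ((∏ i : Fin m, y (RSΦ hmn B hB hC π₁ π₂ i) ^ τ i) *
        ∏ i : Fin m, ∏ j ∈ Finset.univ.filter (fun j => i < j),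
          ((q * y (RSΦ hmn B hB hC π₁ π₂ j) - q⁻¹ * y (RSΦ hmn B hB hC π₁ π₂ i)) /
            (y (RSΦ hmn B hB hC π₁ π₂ j) - y (RSΦ hmn B hB hC π₁ π₂ i)))))
    = Rpol q (fun i : Fin k => τ (RSe hmn (Sum.inl i))) (fun i => y (B.orderEmbOfFin hB i))
      * Rpol q (fun j : Fin n => τ (RSe hmn (Sum.inr j))) (fun j => y (Bᶜ.orderEmbOfFin hC j))
      * ∏ a ∈ B, ∏ b ∈ Bᶜ, ((q * y b - q⁻¹ * y a) / (y b - y a)) := by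
  classical
  set G : Fin m → Fin m → F := fun a b => (q * y b - q⁻¹ * y a) / (y b - y a) with hG
  set A : Fin k → Fin m := fun i => B.orderEmbOfFin hB i with hA
  set C : Fin n → Fin m := fun j => Bᶜ.orderEmbOfFin hC j with hCC
  set T₁ : Equiv.Perm (Fin k) → F := fun π₁ =>
    (∏ i : Fin k, y (A (π₁ i)) ^ τ (RSe hmn (Sum.inl i))) *
      ∏ i : Fin k, ∏ j ∈ Finset.univ.filter (fun j => i < j), G (A (π₁ i)) (A (π₁ j)) with hT₁
  set T₂ : Equiv.Perm (Fin n) → F := fun π₂ =>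
    (∏ i : Fin n, y (C (π₂ i)) ^ τ (RSe hmn (Sum.inr i))) *
      ∏ i : Fin n, ∏ j ∈ Finset.univ.filter (fun j => i < j), G (C (π₂ i)) (C (π₂ j)) with hT₂
  set X : F := ∏ a ∈ B, ∏ b ∈ Bᶜ, G a b with hX
  have key : ∀ (π₁ : Equiv.Perm (Fin k)) (π₂ : Equiv.Perm (Fin n)),
      ((∏ i : Fin m, y (RSΦ hmn B hB hC π₁ π₂ i) ^ τ i) *
        ∏ i : Fin m, ∏ j ∈ Finset.univ.filter (fun j => i < j),
          G (RSΦ hmn B hB hC π₁ π₂ i) (RSΦ hmn B hB hC π₁ π₂ j))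
      = T₁ π₁ * T₂ π₂ * X := by
    intro π₁ π₂
    set Φ : Equiv.Perm (Fin m) := RSΦ hmn B hB hC π₁ π₂ with hΦ
    have hΦl : ∀ i : Fin k, Φ (RSe hmn (Sum.inl i)) = A (π₁ i) :=
      fun i => RSΦ_apply hmn B hB hC π₁ π₂ (Sum.inl i)
    have hΦr : ∀ j : Fin n, Φ (RSe hmn (Sum.inr j)) = C (π₂ j) :=
      fun j => RSΦ_apply hmn B hB hC π₁ π₂ (Sum.inr j)
    have c11 : ∀ (i j : Fin k),
        (RSe hmn (Sum.inl i) < RSe hmn (Sum.inl j)) = (i < j) :=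
      fun i j => propext (by
        rw [Fin.lt_def, Fin.lt_def, RSe_inl_val, RSe_inl_val])
    have c12 : ∀ (i : Fin k) (j : Fin n),
        (RSe hmn (Sum.inl i) < RSe hmn (Sum.inr j)) = True :=
      fun i j => eq_true (by simp only [Fin.lt_def, RSe_inl_val, RSe_inr_val]; omega)
    have c21 : ∀ (i : Fin n) (j : Fin k),
        (RSe hmn (Sum.inr i) < RSe hmn (Sum.inl j)) = False :=
      fun i j => eq_false (by simp only [Fin.lt_def, RSe_inl_val, RSe_inr_val]; omega)
    have c22 : ∀ (i j : Fin n),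
        (RSe hmn (Sum.inr i) < RSe hmn (Sum.inr j)) = (i < j) :=
      fun i j => propext (by
        rw [Fin.lt_def, Fin.lt_def, RSe_inr_val, RSe_inr_val]
        omega)
    have hM : (∏ i : Fin m, y (Φ i) ^ τ i)
        = (∏ i : Fin k, y (A (π₁ i)) ^ τ (RSe hmn (Sum.inl i))) *
          (∏ j : Fin n, y (C (π₂ j)) ^ τ (RSe hmn (Sum.inr j))) := by
      rw [← Equiv.prod_comp (RSe hmn) (fun i => y (Φ i) ^ τ i), Fintype.prod_sum_type]
      simp only [hΦl, hΦr]
    have hP : (∏ i : Fin m, ∏ j ∈ Finset.univ.filter (fun j => i < j), G (Φ i) (Φ j))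
        = (∏ i : Fin k, ∏ j ∈ Finset.univ.filter (fun j => i < j), G (A (π₁ i)) (A (π₁ j)))
          * X
          * (∏ i : Fin n, ∏ j ∈ Finset.univ.filter (fun j => i < j), G (C (π₂ i)) (C (π₂ j))) := by
      have h1 : (∏ i : Fin m, ∏ j ∈ Finset.univ.filter (fun j => i < j), G (Φ i) (Φ j))
          = ∏ i : Fin m, ∏ j : Fin m, if i < j then G (Φ i) (Φ j) else 1 :=
        Finset.prod_congr rfl fun i _ => Finset.prod_filter _ _
      have h2 : (∏ i : Fin m, ∏ j : Fin m, if i < j then G (Φ i) (Φ j) else 1)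
          = ∏ x : Fin k ⊕ Fin n, ∏ z : Fin k ⊕ Fin n,
              if RSe hmn x < RSe hmn z then G (Φ (RSe hmn x)) (Φ (RSe hmn z)) else 1 := by
        rw [← Equiv.prod_comp (RSe hmn)
          (fun i : Fin m => ∏ j : Fin m, if i < j then G (Φ i) (Φ j) else 1)]
        exact Finset.prod_congr rfl fun x _ =>
          (Equiv.prod_comp (RSe hmn)
            (fun j : Fin m => if RSe hmn x < j then G (Φ (RSe hmn x)) (Φ j) else 1)).symm
      have hXeq : (∏ i : Fin k, ∏ j : Fin n, G (A (π₁ i)) (C (π₂ j))) = X := by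
        rw [Equiv.prod_comp π₁ (fun i => ∏ j : Fin n, G (A i) (C (π₂ j)))]
        rw [show (∏ i : Fin k, ∏ j : Fin n, G (A i) (C (π₂ j)))
            = ∏ i : Fin k, ∏ j : Fin n, G (A i) (C j) from
          Finset.prod_congr rfl fun i _ => Equiv.prod_comp π₂ (fun j => G (A i) (C j))]
        rw [hX, hA, hCC]
        rw [RS_prodOrderEmb B hB (fun a => ∏ j : Fin n, G a (Bᶜ.orderEmbOfFin hC j))]
        exact Finset.prod_congr rfl fun a _ => RS_prodOrderEmb Bᶜ hC _
      rw [h1, h2, Fintype.prod_sum_type]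
      simp only [Fintype.prod_sum_type, c11, c12, c21, c22, if_true, if_false,
        hΦl, hΦr, Finset.prod_const_one, mul_one, one_mul, Finset.prod_mul_distrib]
      rw [show (∏ i : Fin k, ∏ j : Fin k, if i < j then G (A (π₁ i)) (A (π₁ j)) else 1)
          = ∏ i : Fin k, ∏ j ∈ Finset.univ.filter (fun j => i < j), G (A (π₁ i)) (A (π₁ j)) from
        Finset.prod_congr rfl fun i _ => (Finset.prod_filter _ _).symm]
      rw [show (∏ i : Fin n, ∏ j : Fin n, if i < j then G (C (π₂ i)) (C (π₂ j)) else 1)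
          = ∏ i : Fin n, ∏ j ∈ Finset.univ.filter (fun j => i < j), G (C (π₂ i)) (C (π₂ j)) from
        Finset.prod_congr rfl fun i _ => (Finset.prod_filter _ _).symm]
      rw [hXeq]
    rw [hM, hP, hT₁, hT₂]
    ring
  calc (∑ π₁ : Equiv.Perm (Fin k), ∑ π₂ : Equiv.Perm (Fin n),
      ((∏ i : Fin m, y (RSΦ hmn B hB hC π₁ π₂ i) ^ τ i) *
        ∏ i : Fin m, ∏ j ∈ Finset.univ.filter (fun j => i < j),
          ((q * y (RSΦ hmn B hB hC π₁ π₂ j) - q⁻¹ * y (RSΦ hmn B hB hC π₁ π₂ i)) /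
            (y (RSΦ hmn B hB hC π₁ π₂ j) - y (RSΦ hmn B hB hC π₁ π₂ i)))))
      = ∑ π₁ : Equiv.Perm (Fin k), ∑ π₂ : Equiv.Perm (Fin n), T₁ π₁ * T₂ π₂ * X :=
        Finset.sum_congr rfl fun π₁ _ => Finset.sum_congr rfl fun π₂ _ => key π₁ π₂
    _ = (∑ π₁ : Equiv.Perm (Fin k), T₁ π₁) * (∑ π₂ : Equiv.Perm (Fin n), T₂ π₂) * X := by
        rw [Finset.sum_mul_sum]
        rw [Finset.sum_mul]
        exact Finset.sum_congr rfl fun π₁ _ => by rw [Finset.sum_mul]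
    _ = Rpol q (fun i : Fin k => τ (RSe hmn (Sum.inl i))) (fun i => y (B.orderEmbOfFin hB i))
      * Rpol q (fun j : Fin n => τ (RSe hmn (Sum.inr j))) (fun j => y (Bᶜ.orderEmbOfFin hC j))
      * ∏ a ∈ B, ∏ b ∈ Bᶜ, ((q * y b - q⁻¹ * y a) / (y b - y a)) := rfl

end RSaux

/-- the splitting identity
`R_τ(y) = Σ_{|B|=k} R_{(τ₁,…,τ_k)}(y_B) R_{(τ_{k+1},…,τ_m)}(y_{B̄})
∏_{i∈B, j∈B̄} (q y_j − q⁻¹ y_i)/(y_j − y_i)`. -/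
theorem Rpol_splitting {F : Type*} [Field F] (q : F) (hq : q ≠ 0)
    (m k : ℕ) (hm : 1 ≤ m) (hk : k ≤ m) (τ : Fin m → ℤ)
    (y : Fin m → F) (hy0 : ∀ i, y i ≠ 0) (hy : Function.Injective y) :
    Rpol q τ y = ∑ B ∈ Finset.powersetCard k (Finset.univ : Finset (Fin m)),
      if h : B.card = k then
        Rpol q (fun i : Fin k => τ (Fin.castLE hk i))
            (fun i => y (B.orderEmbOfFin h i))
        * Rpol q (fun i : Fin (m - k) => τ ⟨k + (i : ℕ), by have := i.isLt; omega⟩)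
            (fun i => y (Bᶜ.orderEmbOfFin (by simp [Finset.card_compl, h]) i))
        * ∏ i ∈ B, ∏ j ∈ Bᶜ, ((q * y j - q⁻¹ * y i) / (y j - y i))
      else 0 := by
  classical
  have hmn : k + (m - k) = m := by omega
  rw [Rpol, RS_sum hmn]
  refine Finset.sum_congr rfl fun B hBmem => ?_
  have hB : B.card = k := (Finset.mem_powersetCard.mp hBmem).2
  rw [dif_pos hB, dif_pos hB]
  rw [RS_term hmn q τ y B hB (RScardC hmn hB)]
  have hτ1 : (fun i : Fin k => τ (RSe hmn (Sum.inl i)))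
      = fun i : Fin k => τ (Fin.castLE hk i) :=
    funext fun i => congrArg τ (Fin.ext (by simp))
  have hτ2 : (fun j : Fin (m - k) => τ (RSe hmn (Sum.inr j)))
      = fun i : Fin (m - k) => τ ⟨k + (i : ℕ), by have := i.isLt; omega⟩ :=
    funext fun j => congrArg τ (Fin.ext (by simp))
  rw [hτ1, hτ2]
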